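/- arXiv:1605.02595 — 3 statements merged into one kernel-verified Lean document; each statement's English description precedes it below -/
import Mathlib

section
/- Let m⁺_j > 0 and m⁻_j < 0 for j = 0,...,N with N ≥ 4, satisfying m⁺_j ≤ 2·m⁺_{j+1} and |m⁻_j| ≤ 2·|m⁻_{j+1}| for all j, and m⁺_N/m⁺_0 ≤ C·2^N, |m⁻_N|/|m⁻_0| ≤ C·2^N, with C ≥ 1. Then there exist at least N/2 indices k ∈ {0,...,N-1} such that simultaneously m⁺_{k+1} ≤ 128C·m⁺_k and |m⁻_{k+1}| ≤ 128C·|m⁻_k|. -/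
open Finset

lemma stmt3_prod {N : ℕ} {f : ℕ → ℝ} (hf : ∀ j ≤ N, 0 < f j) :
    ∀ n ≤ N, f n = f 0 * ∏ k ∈ range n, (f (k + 1) / f k) := by
  intro n hn
  induction n with
  | zero => simp
  | succ m ih =>
    rw [prod_range_succ, ← mul_assoc, ← ih (by omega)]
    rw [mul_div_cancel₀ _ (ne_of_gt (hf m (by omega)))]

lemma stmt3_aux (N : ℕ) (f : ℕ → ℝ) (hf : ∀ j ≤ N, 0 < f j)
    (hgrow : ∀ j < N, f j ≤ 2 * f (j + 1)) (C : ℝ) (hC : 1 ≤ C)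
    (htot : f N / f 0 ≤ C * 2 ^ N) :
    4 * ((range N).filter fun k => ¬ f (k + 1) ≤ 128 * C * f k).card ≤ N := by
  set B := (range N).filter fun k => ¬ f (k + 1) ≤ 128 * C * f k with hB
  set b := B.card with hb
  have hbN : b ≤ N := by
    calc b ≤ (range N).card := card_filter_le _ _
    _ = N := card_range N
  rcases Nat.eq_zero_or_pos b with h0 | hpos
  · omega
  have hCpos : (0 : ℝ) < C := lt_of_lt_of_le one_pos hC
  -- lower bound the telescoping product
  have hsplit : (∏ k ∈ B, (f (k + 1) / f k)) *
      ∏ k ∈ (range N).filter (fun k => ¬¬ f (k + 1) ≤ 128 * C * f k), (f (k + 1) / f k)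
      = ∏ k ∈ range N, (f (k + 1) / f k) := by
    rw [hB]
    exact prod_filter_mul_prod_filter_not (range N) _ _
  have hpow1 : (128 * C) ^ b ≤ ∏ k ∈ B, (f (k + 1) / f k) := by
    rw [← prod_const]
    apply prod_le_prod
    · intro k hk; positivity
    · intro k hk
      rw [hB, mem_filter, mem_range] at hk
      have hk1 := hf k (by omega)
      have hk2 : 128 * C * f k ≤ f (k + 1) := le_of_lt (lt_of_not_ge hk.2)
      rw [le_div_iff₀ hk1]
      exact hk2
  have hpow2 : ((1 : ℝ) / 2) ^ (N - b) ≤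
      ∏ k ∈ (range N).filter (fun k => ¬¬ f (k + 1) ≤ 128 * C * f k), (f (k + 1) / f k) := by
    have hcard : ((range N).filter (fun k => ¬¬ f (k + 1) ≤ 128 * C * f k)).card = N - b := by
      have := card_filter_add_card_filter_not (s := range N)
        (p := fun k => ¬ f (k + 1) ≤ 128 * C * f k)
      rw [card_range] at this
      have hbb : b = ((range N).filter fun k => ¬ f (k + 1) ≤ 128 * C * f k).card := rfl
      omega
    rw [← hcard, ← prod_const]
    apply prod_le_prod
    · intro k hk; norm_num
    · intro k hk
      rw [mem_filter, mem_range] at hk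
      have hk0 := hf k (by omega)
      have hk1 := hf (k + 1) (by omega)
      have := hgrow k hk.1
      rw [div_le_div_iff₀ (by norm_num) hk0]
      linarith
  have hprodpos : (0:ℝ) <
      ∏ k ∈ (range N).filter (fun k => ¬¬ f (k + 1) ≤ 128 * C * f k), (f (k + 1) / f k) := by
    apply prod_pos
    intro k hk
    rw [mem_filter, mem_range] at hk
    exact div_pos (hf (k+1) (by omega)) (hf k (by omega))
  have hBpos : (0:ℝ) < ∏ k ∈ B, (f (k + 1) / f k) := by
    apply prod_pos
    intro k hk
    rw [hB, mem_filter, mem_range] at hk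
    exact div_pos (hf (k+1) (by omega)) (hf k (by omega))
  have key : (128 * C) ^ b * ((1:ℝ) / 2) ^ (N - b) ≤ C * 2 ^ N := by
    have h1 : (128 * C) ^ b * ((1:ℝ) / 2) ^ (N - b) ≤ ∏ k ∈ range N, (f (k + 1) / f k) := by
      rw [← hsplit]
      have h2 : (0:ℝ) ≤ ((1:ℝ)/2) ^ (N - b) := by positivity
      have h3 : (0:ℝ) ≤ (128 * C) ^ b := by positivity
      exact mul_le_mul hpow1 hpow2 h2 (le_trans h3 hpow1)
    have heq : f N / f 0 = ∏ k ∈ range N, (f (k + 1) / f k) := by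
      rw [stmt3_prod hf N le_rfl, mul_comm, mul_div_assoc,
        div_self (ne_of_gt (hf 0 (by omega))), mul_one]
    linarith [h1, heq ▸ htot]
  -- now extract 4b ≤ N
  have step : (128 : ℝ) ^ b * C ≤ C * 2 ^ (2 * N - b) := by
    have h2 : ((1:ℝ)/2) ^ (N - b) = (2 ^ (N - b))⁻¹ := by
      rw [one_div, inv_pow]
    have hkey2 : (128 * C) ^ b ≤ C * 2 ^ N * 2 ^ (N - b) := by
      rw [h2] at key
      have h2p : (0:ℝ) < 2 ^ (N - b) := by positivity
      calc (128 * C) ^ b = (128 * C) ^ b * (2 ^ (N - b))⁻¹ * 2 ^ (N - b) := by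
            field_simp
        _ ≤ C * 2 ^ N * 2 ^ (N - b) := by
            apply mul_le_mul_of_nonneg_right key (le_of_lt h2p)
    have hexp : C * 2 ^ N * 2 ^ (N - b) = C * 2 ^ (2 * N - b) := by
      rw [mul_assoc, ← pow_add]
      congr 2
      omega
    have hCb : (128:ℝ) ^ b * C ≤ (128 * C) ^ b := by
      rw [mul_pow]
      apply mul_le_mul_of_nonneg_left _ (by positivity)
      calc C = C ^ 1 := (pow_one C).symm
        _ ≤ C ^ b := pow_le_pow_right₀ hC hpos
    linarith [hexp ▸ hkey2]
  have step2 : (128 : ℝ) ^ b ≤ 2 ^ (2 * N - b) :=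
    le_of_mul_le_mul_right (by linarith [step]) hCpos
  have step3 : (2 : ℝ) ^ (7 * b) ≤ 2 ^ (2 * N - b) := by
    calc (2:ℝ) ^ (7 * b) = (2 ^ 7) ^ b := by rw [← pow_mul]
      _ = 128 ^ b := by norm_num
      _ ≤ 2 ^ (2 * N - b) := step2
  have : 7 * b ≤ 2 * N - b := by
    exact_mod_cast (pow_le_pow_iff_right₀ (by norm_num : (1:ℝ) < 2)).mp step3
  omega

/-- Given `m⁺_j > 0`, `m⁻_j < 0` for `j = 0,…,N`, `N ≥ 4`, with
`m⁺_j ≤ 2 m⁺_{j+1}`, `|m⁻_j| ≤ 2 |m⁻_{j+1}|`, and `m⁺_N/m⁺_0 ≤ C·2^N`,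
`|m⁻_N|/|m⁻_0| ≤ C·2^N`, `C ≥ 1`, there are at least `N/2` indices
`k ∈ {0,…,N-1}` with simultaneously `m⁺_{k+1} ≤ 128C·m⁺_k` and
`|m⁻_{k+1}| ≤ 128C·|m⁻_k|`. -/
theorem stmt3 (N : ℕ) (hN : 4 ≤ N) (mp mn : ℕ → ℝ)
    (hmp : ∀ j ≤ N, 0 < mp j) (hmn : ∀ j ≤ N, mn j < 0)
    (hgrowp : ∀ j < N, mp j ≤ 2 * mp (j + 1))
    (hgrown : ∀ j < N, |mn j| ≤ 2 * |mn (j + 1)|)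
    (C : ℝ) (hC : 1 ≤ C)
    (htotp : mp N / mp 0 ≤ C * 2 ^ N)
    (htotn : |mn N| / |mn 0| ≤ C * 2 ^ N) :
    (N : ℝ) / 2 ≤
      (((range N).filter fun k =>
        mp (k + 1) ≤ 128 * C * mp k ∧ |mn (k + 1)| ≤ 128 * C * |mn k|).card : ℝ) := by
  have hp := stmt3_aux N mp hmp hgrowp C hC htotp
  have hn' : ∀ j ≤ N, 0 < |mn j| := fun j hj => abs_pos.mpr (ne_of_lt (hmn j hj))
  have hq := stmt3_aux N (fun j => |mn j|) hn' hgrown C hC htotn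
  set G := (range N).filter fun k =>
    mp (k + 1) ≤ 128 * C * mp k ∧ |mn (k + 1)| ≤ 128 * C * |mn k| with hG
  set Bp := (range N).filter fun k => ¬ mp (k + 1) ≤ 128 * C * mp k with hBp
  set Bn := (range N).filter fun k => ¬ |mn (k + 1)| ≤ 128 * C * |mn k| with hBn
  have hsub : range N ⊆ G ∪ Bp ∪ Bn := by
    intro k hk
    simp only [hG, hBp, hBn, mem_union, mem_filter]
    by_cases h1 : mp (k + 1) ≤ 128 * C * mp k
    · by_cases h2 : |mn (k + 1)| ≤ 128 * C * |mn k|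
      · exact Or.inl (Or.inl ⟨hk, h1, h2⟩)
      · exact Or.inr ⟨hk, h2⟩
    · exact Or.inl (Or.inr ⟨hk, h1⟩)
  have hcard : N ≤ G.card + Bp.card + Bn.card := by
    calc N = (range N).card := (card_range N).symm
      _ ≤ (G ∪ Bp ∪ Bn).card := card_le_card hsub
      _ ≤ (G ∪ Bp).card + Bn.card := card_union_le _ _
      _ ≤ G.card + Bp.card + Bn.card := by
          exact Nat.add_le_add_right (card_union_le _ _) _
  have : N ≤ 2 * G.card := by omega
  have hcast : (N : ℝ) ≤ 2 * (G.card : ℝ) := by exact_mod_cast this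
  linarith
end

section
/- Suppose that to each cube on the j-th step of a Y-adic subdivision we assign a level s ∈ {0,...,j}, such that on step 0 there is one cube at level 0, and each cube at level s subdivides into Y cubes of which at least one has level ≥ s+1 and the rest have level ≥ s. Then for each k, the number of j-th-step cubes with level ≤ k is at most ∑_{s=0}^{k} C(j,s)·(Y-1)^{j-s}. -/
open Finset

lemma Tsucc (W j k : ℕ) :
    ∑ s ∈ range (k+2), (j+1).choose s * W^(j+1-s)
      = W * ∑ s ∈ range (k+2), j.choose s * W^(j-s)
        + ∑ s ∈ range (k+1), j.choose s * W^(j-s) := by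
  rw [Finset.sum_range_succ' (fun s => (j+1).choose s * W^(j+1-s)) (k+1),
      Finset.sum_range_succ' (fun s => j.choose s * W^(j-s)) (k+1), Nat.mul_add]
  have h1 : ∀ i, (j+1).choose (i+1) * W^(j+1-(i+1))
      = j.choose i * W^(j-i) + j.choose (i+1) * W^(j-i) := by
    intro i
    have he : j + 1 - (i+1) = j - i := by omega
    rw [Nat.choose_succ_succ', Nat.add_mul, he]
  have h2 : ∀ i, j.choose (i+1) * W^(j-i) = W * (j.choose (i+1) * W^(j-(i+1))) := by
    intro i
    rcases le_or_gt (i+1) j with h | h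
    · have : j - i = (j - (i+1)) + 1 := by omega
      rw [this, pow_succ]; ring
    · rw [Nat.choose_eq_zero_of_lt h]; simp
  simp only [h1, Finset.sum_add_distrib]
  rw [Finset.mul_sum]
  simp only [h2, Nat.choose_zero_right, one_mul]
  have : j + 1 - 0 = (j - 0) + 1 := rfl
  rw [this, pow_succ]
  ring

lemma stmt5_nat (Y : ℕ) (hY : 2 ≤ Y)
    (level : (j : ℕ) → (Fin j → Fin Y) → ℕ)
    (himprove : ∀ (j : ℕ) (c : Fin j → Fin Y),
      ∃ y : Fin Y, level j c + 1 ≤ level (j + 1) (Fin.snoc c y))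
    (hmono : ∀ (j : ℕ) (c : Fin j → Fin Y) (y : Fin Y),
      level j c ≤ level (j + 1) (Fin.snoc c y))
    (j k : ℕ) :
    (univ.filter fun c : Fin j → Fin Y => level j c ≤ k).card
      ≤ ∑ s ∈ range (k + 1), j.choose s * (Y-1) ^ (j - s) := by
  induction j generalizing k with
  | zero =>
    have h1 : (univ.filter fun c : Fin 0 → Fin Y => level 0 c ≤ k).card ≤ 1 := by
      calc (univ.filter fun c : Fin 0 → Fin Y => level 0 c ≤ k).card
          ≤ (univ : Finset (Fin 0 → Fin Y)).card := Finset.card_filter_le _ _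
        _ = 1 := by simp
    refine h1.trans ?_
    calc (1 : ℕ) = Nat.choose 0 0 * (Y-1)^(0-0) := by simp
      _ ≤ _ := Finset.single_le_sum (f := fun s => Nat.choose 0 s * (Y-1)^(0-s))
          (fun _ _ => Nat.zero_le _) (Finset.mem_range.mpr (by omega))
  | succ j ih =>
    -- split by the first j coordinates
    have key : (univ.filter fun c : Fin (j+1) → Fin Y => level (j+1) c ≤ k).card
        = ∑ p : Fin j → Fin Y,
            (univ.filter fun y : Fin Y => level (j+1) (Fin.snoc p y) ≤ k).card := by
      rw [Finset.card_eq_sum_card_fiberwise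
          (f := fun c : Fin (j+1) → Fin Y => Fin.init c) (t := univ)
          (fun _ _ => Finset.mem_univ _)]
      refine Finset.sum_congr rfl fun p _ => ?_
      refine Finset.card_bij (fun c _ => c (Fin.last j)) ?_ ?_ ?_
      · intro c hc
        simp only [Finset.mem_filter, Finset.mem_univ, true_and] at hc ⊢
        rcases hc with ⟨h1, h2⟩
        rw [← h2, Fin.snoc_init_self]; exact h1
      · intro a ha b hb hab
        simp only [Finset.mem_filter, Finset.mem_univ, true_and] at ha hb
        have hab' : a (Fin.last j) = b (Fin.last j) := hab
        calc a = Fin.snoc (Fin.init a) (a (Fin.last j)) := (Fin.snoc_init_self a).symm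
          _ = Fin.snoc p (b (Fin.last j)) := by rw [ha.2, hab']
          _ = Fin.snoc (Fin.init b) (b (Fin.last j)) := by rw [hb.2]
          _ = b := Fin.snoc_init_self b
      · intro y hy
        simp only [Finset.mem_filter, Finset.mem_univ, true_and] at hy
        refine ⟨Fin.snoc p y, ?_, ?_⟩
        · simp only [Finset.mem_filter, Finset.mem_univ, true_and]
          exact ⟨hy, by simp⟩
        · simp
    have bound : ∀ p : Fin j → Fin Y,
        (univ.filter fun y : Fin Y => level (j+1) (Fin.snoc p y) ≤ k).card
          ≤ (Y-1) * (if level j p ≤ k then 1 else 0) + (if level j p + 1 ≤ k then 1 else 0) := by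
      intro p
      by_cases h1 : level j p + 1 ≤ k
      · rw [if_pos (by omega), if_pos h1]
        calc (univ.filter fun y : Fin Y => level (j+1) (Fin.snoc p y) ≤ k).card
            ≤ (univ : Finset (Fin Y)).card := Finset.card_filter_le _ _
          _ = Y := by simp
          _ = (Y-1) * 1 + 1 := by omega
      · by_cases h2 : level j p ≤ k
        · rw [if_pos h2, if_neg h1]
          obtain ⟨y₀, hy₀⟩ := himprove j p
          have hsub : (univ.filter fun y : Fin Y => level (j+1) (Fin.snoc p y) ≤ k)
              ⊆ univ.erase y₀ := by
            intro y hy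
            simp only [Finset.mem_filter, Finset.mem_univ, true_and] at hy
            refine Finset.mem_erase.mpr ⟨?_, Finset.mem_univ _⟩
            rintro rfl; omega
          calc (univ.filter fun y : Fin Y => level (j+1) (Fin.snoc p y) ≤ k).card
              ≤ (univ.erase y₀).card := Finset.card_le_card hsub
            _ = Y - 1 := by rw [Finset.card_erase_of_mem (Finset.mem_univ _)]; simp
            _ = (Y-1) * 1 + 0 := by omega
        · rw [if_neg h2, if_neg h1]
          have : (univ.filter fun y : Fin Y => level (j+1) (Fin.snoc p y) ≤ k) = ∅ := by
            refine Finset.filter_eq_empty_iff.mpr fun y _ => ?_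
            have := hmono j p y; omega
          simp [this]
    have step : (univ.filter fun c : Fin (j+1) → Fin Y => level (j+1) c ≤ k).card
        ≤ (Y-1) * (univ.filter fun p : Fin j → Fin Y => level j p ≤ k).card
          + (univ.filter fun p : Fin j → Fin Y => level j p + 1 ≤ k).card := by
      rw [key]
      calc ∑ p : Fin j → Fin Y, (univ.filter fun y : Fin Y => level (j+1) (Fin.snoc p y) ≤ k).card
          ≤ ∑ p : Fin j → Fin Y, ((Y-1) * (if level j p ≤ k then 1 else 0)
              + (if level j p + 1 ≤ k then 1 else 0)) :=
            Finset.sum_le_sum fun p _ => bound p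
        _ = _ := by
            rw [Finset.sum_add_distrib, ← Finset.mul_sum,
              Finset.card_filter, Finset.card_filter]
    refine step.trans ?_
    match k with
    | 0 =>
      have hemp : (univ.filter fun p : Fin j → Fin Y => level j p + 1 ≤ 0) = ∅ := by
        refine Finset.filter_eq_empty_iff.mpr fun p _ => by omega
      rw [hemp]
      simp only [Finset.card_empty, Nat.add_zero]
      have : ∑ s ∈ range 1, (j+1).choose s * (Y-1)^(j+1-s)
          = (Y-1) * ∑ s ∈ range 1, j.choose s * (Y-1)^(j-s) := by
        simp [pow_succ, mul_comm]
      rw [this]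
      exact Nat.mul_le_mul_left _ (ih 0)
    | k' + 1 =>
      have heq : (univ.filter fun p : Fin j → Fin Y => level j p + 1 ≤ k' + 1)
          = (univ.filter fun p : Fin j → Fin Y => level j p ≤ k') := by
        apply Finset.filter_congr; intro p _; constructor <;> (intro; omega)
      rw [heq, Tsucc]
      exact Nat.add_le_add (Nat.mul_le_mul_left _ (ih (k'+1))) (ih k')

/-- induction counting step. Cubes on step `j` of a `Y`-adic
subdivision are modelled as sequences `Fin j → Fin Y` of child choices. If levels are
assigned so that the root has level `0`, each cube at level `s` has at least one child
of level `≥ s+1` and all its children have level `≥ s`, then for each `k` the number of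
`j`-th step cubes of level `≤ k` is at most `∑_{s=0}^{k} C(j,s)·(Y-1)^{j-s}`. -/
theorem stmt5 (Y : ℕ) (hY : 2 ≤ Y)
    (level : (j : ℕ) → (Fin j → Fin Y) → ℕ)
    (hroot : ∀ c : Fin 0 → Fin Y, level 0 c = 0)
    (himprove : ∀ (j : ℕ) (c : Fin j → Fin Y),
      ∃ y : Fin Y, level j c + 1 ≤ level (j + 1) (Fin.snoc c y))
    (hmono : ∀ (j : ℕ) (c : Fin j → Fin Y) (y : Fin Y),
      level j c ≤ level (j + 1) (Fin.snoc c y))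
    (j k : ℕ) :
    ((univ.filter fun c : Fin j → Fin Y => level j c ≤ k).card : ℝ)
      ≤ ∑ s ∈ range (k + 1), (j.choose s : ℝ) * ((Y : ℝ) - 1) ^ (j - s) := by
  have h := stmt5_nat Y hY level himprove hmono j k
  have hc : ((Y : ℝ) - 1) = ((Y - 1 : ℕ) : ℝ) := by
    rw [Nat.cast_sub (by omega), Nat.cast_one]
  calc ((univ.filter fun c : Fin j → Fin Y => level j c ≤ k).card : ℝ)
      ≤ ((∑ s ∈ range (k + 1), j.choose s * (Y-1) ^ (j - s) : ℕ) : ℝ) := by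
        exact_mod_cast h
    _ = _ := by
        rw [hc]
        push_cast
        rfl
end

section
/- Abstract subdivision lemma: Let Y ≥ 2 be an integer and let F be a function assigning to each cube in a Y-adic subdivision tree a nonnegative real, with root value ≤ N₀, such that whenever a cube c is subdivided into Y children, at least one child c' has F(c') ≤ F(c)/2 and all children c'' have F(c'') ≤ F(c). Then there exists δ > 0 and j₀ (both depending only on Y) such that for all j ≥ j₀, at least half of the Y^j cubes at depth j satisfy F ≤ N₀/(Y^j)^δ. -/
open Finset

namespace Stmt17

variable {Y : ℕ}

/-- the prefix of length `i` of a node at depth `j`. -/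
def pre {j : ℕ} (c : Fin j → Fin Y) (i : Fin j) : Fin i.val → Fin Y :=
  fun k => c ⟨k.val, k.isLt.trans i.isLt⟩

/-- the path `c` takes the distinguished child at step `i`. -/
def distAt (g : ∀ m, (Fin m → Fin Y) → Fin Y) {j : ℕ} (c : Fin j → Fin Y) (i : Fin j) : Prop :=
  c i = g i.val (pre c i)

instance (g : ∀ m, (Fin m → Fin Y) → Fin Y) {j : ℕ} (c : Fin j → Fin Y) (i : Fin j) :
    Decidable (distAt g c i) := by unfold distAt; infer_instance

/-- number of distinguished steps along `c`. -/
def S (g : ∀ m, (Fin m → Fin Y) → Fin Y) {j : ℕ} (c : Fin j → Fin Y) : ℕ :=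
  ∑ i : Fin j, if distAt g c i then 1 else 0

lemma decay (g : ∀ m, (Fin m → Fin Y) → Fin Y) (F : (j : ℕ) → (Fin j → Fin Y) → ℝ) (N₀ : ℝ)
    (h2 : ∀ c : Fin 0 → Fin Y, F 0 c ≤ N₀)
    (h3 : ∀ j c, F (j + 1) (Fin.snoc c (g j c)) ≤ F j c / 2)
    (h4 : ∀ (j : ℕ) (c : Fin j → Fin Y) (y : Fin Y), F (j + 1) (Fin.snoc c y) ≤ F j c) :
    ∀ j (c : Fin j → Fin Y), F j c * 2 ^ S g c ≤ N₀ := by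
  intro j
  induction j with
  | zero => intro c; simpa [S] using h2 c
  | succ n ih =>
    intro c
    have hc : Fin.snoc (Fin.init c) (c (Fin.last n)) = c := Fin.snoc_init_self c
    have hS : S g c = S g (Fin.init c) + (if distAt g c (Fin.last n) then 1 else 0) := by
      rw [S, Fin.sum_univ_castSucc]
      congr 1
    have ihc := ih (Fin.init c)
    have hp : (0:ℝ) < 2 ^ S g (Fin.init c) := by positivity
    by_cases hd : distAt g c (Fin.last n)
    · have hy : c (Fin.last n) = g n (Fin.init c) := hd
      have hF : F (n + 1) c ≤ F n (Fin.init c) / 2 := by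
        conv_lhs => rw [← hc, hy]
        exact h3 n (Fin.init c)
      rw [hS, if_pos hd, pow_succ]
      have := mul_le_mul_of_nonneg_right hF hp.le
      nlinarith
    · have hF : F (n + 1) c ≤ F n (Fin.init c) := by
        conv_lhs => rw [← hc]
        exact h4 n (Fin.init c) (c (Fin.last n))
      rw [hS, if_neg hd, add_zero]
      have := mul_le_mul_of_nonneg_right hF hp.le
      linarith

lemma pre_update {j : ℕ} (c : Fin j → Fin Y) {a b : Fin j} (y : Fin Y) (hab : a.val ≤ b.val) :
    pre (Function.update c b y) a = pre c a := by
  funext k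
  have hne : (⟨k.val, k.isLt.trans a.isLt⟩ : Fin j) ≠ b :=
    Fin.ne_of_val_ne (Nat.ne_of_lt (k.isLt.trans_le hab))
  show Function.update c b y ⟨k.val, k.isLt.trans a.isLt⟩ = c ⟨k.val, k.isLt.trans a.isLt⟩
  exact Function.update_of_ne hne y c

lemma distAt_update (g : ∀ m, (Fin m → Fin Y) → Fin Y) {j : ℕ} (c : Fin j → Fin Y)
    {a b : Fin j} (y : Fin Y) (hab : a < b) :
    distAt g (Function.update c b y) a ↔ distAt g c a := by
  unfold distAt
  rw [pre_update c y (le_of_lt hab), Function.update_of_ne (Fin.ne_of_lt hab)]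

lemma shift_card [NeZero Y] {j : ℕ} (i : Fin j) (h : (Fin j → Fin Y) → Fin Y)
    (hh : ∀ c y, h (Function.update c i y) = h c)
    (P : (Fin j → Fin Y) → Prop) [DecidablePred P]
    (hP : ∀ c y, P (Function.update c i y) ↔ P c) :
    (univ.filter fun c => c i = h c ∧ P c).card
      = (univ.filter fun c => c i = 0 ∧ P c).card := by
  apply Finset.card_bij' (i := fun c _ => Function.update c i 0)
    (j := fun c _ => Function.update c i (h c))
  · intro c hc
    simp only [mem_filter, mem_univ, true_and] at hc ⊢
    exact ⟨Function.update_self i 0 c, (hP c 0).mpr hc.2⟩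
  · intro c hc
    simp only [mem_filter, mem_univ, true_and] at hc ⊢
    refine ⟨?_, (hP c (h c)).mpr hc.2⟩
    rw [Function.update_self, hh]
  · intro c hc
    simp only [mem_filter, mem_univ, true_and] at hc
    rw [Function.update_idem, hh, ← hc.1, Function.update_eq_self]
  · intro c hc
    simp only [mem_filter, mem_univ, true_and] at hc
    rw [Function.update_idem, ← hc.1, Function.update_eq_self]

lemma card_zeros [NeZero Y] {j : ℕ} (s : Finset (Fin j)) :
    (univ.filter fun c : Fin j → Fin Y => ∀ i ∈ s, c i = 0).card = Y ^ (j - s.card) := by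
  have h1 : (univ.filter fun c : Fin j → Fin Y => ∀ i ∈ s, c i = 0)
      = Fintype.piFinset (fun i => if i ∈ s then ({0} : Finset (Fin Y)) else univ) := by
    ext c
    simp only [mem_filter, mem_univ, true_and, Fintype.mem_piFinset]
    constructor
    · intro h i
      by_cases hi : i ∈ s <;> simp [hi, h]
    · intro h i hi
      have := h i; simp only [if_pos hi, mem_singleton] at this; exact this
  rw [h1, Fintype.card_piFinset]
  have hs : ∀ i ∈ s, ((if i ∈ s then ({0} : Finset (Fin Y)) else univ)).card = 1 := by
    intro i hi; simp [hi]
  have hsc : ∀ i ∈ sᶜ, ((if i ∈ s then ({0} : Finset (Fin Y)) else univ)).card = Y := by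
    intro i hi; simp [Finset.mem_compl.mp hi]
  rw [← Finset.prod_mul_prod_compl s, Finset.prod_congr rfl hs, Finset.prod_congr rfl hsc,
    Finset.prod_const_one, Finset.prod_const, one_mul, Finset.card_compl,
    Fintype.card_fin]

lemma card_distAt [NeZero Y] (g : ∀ m, (Fin m → Fin Y) → Fin Y) {j : ℕ} (i : Fin j) :
    (univ.filter fun c : Fin j → Fin Y => distAt g c i).card = Y ^ (j - 1) := by
  have hh : ∀ (c : Fin j → Fin Y) y, g i.val (pre (Function.update c i y) i) = g i.val (pre c i) :=
    fun c y => by rw [pre_update c y le_rfl]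
  have e1 : (univ.filter fun c : Fin j → Fin Y => distAt g c i)
      = univ.filter fun c => c i = g i.val (pre c i) ∧ True := by
    apply Finset.filter_congr; intro c _; simp [distAt]
  rw [e1, shift_card i (fun c => g i.val (pre c i)) hh (fun _ => True) (fun _ _ => Iff.rfl)]
  have e2 : (univ.filter fun c : Fin j → Fin Y => c i = 0 ∧ True)
      = univ.filter fun c => ∀ k ∈ ({i} : Finset (Fin j)), c k = 0 := by
    apply Finset.filter_congr; intro c _; simp
  rw [e2, card_zeros, Finset.card_singleton]

lemma card_distAt_pair [NeZero Y] (g : ∀ m, (Fin m → Fin Y) → Fin Y) {j : ℕ}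
    {i i' : Fin j} (hii : i < i') :
    (univ.filter fun c : Fin j → Fin Y => distAt g c i ∧ distAt g c i').card = Y ^ (j - 2) := by
  have hh' : ∀ (c : Fin j → Fin Y) y,
      g i'.val (pre (Function.update c i' y) i') = g i'.val (pre c i') :=
    fun c y => by rw [pre_update c y le_rfl]
  have e1 : (univ.filter fun c : Fin j → Fin Y => distAt g c i ∧ distAt g c i')
      = univ.filter fun c => c i' = g i'.val (pre c i') ∧ distAt g c i := by
    apply Finset.filter_congr; intro c _; rw [and_comm]; rfl
  rw [e1, shift_card i' (fun c => g i'.val (pre c i')) hh' (fun c => distAt g c i)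
    (fun c y => distAt_update g c y hii)]
  have e2 : (univ.filter fun c : Fin j → Fin Y => c i' = 0 ∧ distAt g c i)
      = univ.filter fun c => c i = g i.val (pre c i) ∧ c i' = 0 := by
    apply Finset.filter_congr; intro c _; rw [and_comm]; rfl
  have hh : ∀ (c : Fin j → Fin Y) y, g i.val (pre (Function.update c i y) i) = g i.val (pre c i) :=
    fun c y => by rw [pre_update c y le_rfl]
  have hP : ∀ (c : Fin j → Fin Y) y,
      (Function.update c i y) i' = 0 ↔ c i' = 0 := by
    intro c y
    rw [Function.update_of_ne (Fin.ne_of_gt hii)]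
  rw [e2, shift_card i (fun c => g i.val (pre c i)) hh (fun c => c i' = 0) hP]
  have e3 : (univ.filter fun c : Fin j → Fin Y => c i = 0 ∧ c i' = 0)
      = univ.filter fun c => ∀ k ∈ ({i, i'} : Finset (Fin j)), c k = 0 := by
    apply Finset.filter_congr; intro c _; simp
  rw [e3, card_zeros, Finset.card_insert_of_notMem (by simp [Fin.ne_of_lt hii]),
    Finset.card_singleton]

lemma card_distAt_pair' [NeZero Y] (g : ∀ m, (Fin m → Fin Y) → Fin Y) {j : ℕ}
    {i i' : Fin j} (hii : i ≠ i') :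
    (univ.filter fun c : Fin j → Fin Y => distAt g c i ∧ distAt g c i').card = Y ^ (j - 2) := by
  rcases lt_or_gt_of_ne hii with h | h
  · exact card_distAt_pair g h
  · have e : (univ.filter fun c : Fin j → Fin Y => distAt g c i ∧ distAt g c i')
        = univ.filter fun c => distAt g c i' ∧ distAt g c i := by
      apply Finset.filter_congr; intro c _; rw [and_comm]
    rw [e]
    exact card_distAt_pair g h

lemma sum_S [NeZero Y] (g : ∀ m, (Fin m → Fin Y) → Fin Y) (j : ℕ) :
    ∑ c : Fin j → Fin Y, (S g c : ℝ) = j * (Y : ℝ) ^ (j - 1) := by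
  have : ∀ c : Fin j → Fin Y, (S g c : ℝ) = ∑ i : Fin j, if distAt g c i then (1:ℝ) else 0 := by
    intro c; rw [S]; push_cast; simp
  rw [Finset.sum_congr rfl fun c _ => this c, Finset.sum_comm]
  have : ∀ i : Fin j, (∑ c : Fin j → Fin Y, if distAt g c i then (1:ℝ) else 0)
      = (Y : ℝ) ^ (j - 1) := by
    intro i
    rw [Finset.sum_boole, card_distAt g i]
    push_cast; ring
  rw [Finset.sum_congr rfl fun i _ => this i, Finset.sum_const, Finset.card_univ,
    Fintype.card_fin, nsmul_eq_mul]

lemma sum_S_sq [NeZero Y] (g : ∀ m, (Fin m → Fin Y) → Fin Y) (j : ℕ) :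
    ∑ c : Fin j → Fin Y, (S g c : ℝ) ^ 2
      = j * (Y : ℝ) ^ (j - 1) + ((j:ℝ) ^ 2 - j) * (Y : ℝ) ^ (j - 2) := by
  have hsq : ∀ c : Fin j → Fin Y, (S g c : ℝ) ^ 2
      = ∑ i : Fin j, ∑ i' : Fin j, (if distAt g c i ∧ distAt g c i' then (1:ℝ) else 0) := by
    intro c
    have h1 : (S g c : ℝ) = ∑ i : Fin j, if distAt g c i then (1:ℝ) else 0 := by
      rw [S]; push_cast; simp
    rw [h1, sq, Finset.sum_mul_sum]
    apply Finset.sum_congr rfl; intro i _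
    apply Finset.sum_congr rfl; intro i' _
    by_cases h : distAt g c i <;> by_cases h' : distAt g c i' <;> simp [h, h']
  have step : ∀ i i' : Fin j, (∑ c : Fin j → Fin Y,
      (if distAt g c i ∧ distAt g c i' then (1:ℝ) else 0))
      = if i = i' then (Y:ℝ) ^ (j - 1) else (Y:ℝ) ^ (j - 2) := by
    intro i i'
    rw [Finset.sum_boole]
    by_cases h : i = i'
    · subst h
      rw [if_pos rfl]
      have e : (univ.filter fun c : Fin j → Fin Y => distAt g c i ∧ distAt g c i)
          = univ.filter fun c => distAt g c i := by
        apply Finset.filter_congr; intro c _; rw [and_self]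
      rw [e, card_distAt g i]
      push_cast; ring
    · rw [if_neg h, card_distAt_pair' g h]
      push_cast; ring
  calc ∑ c : Fin j → Fin Y, (S g c : ℝ) ^ 2
      = ∑ c : Fin j → Fin Y, ∑ i : Fin j, ∑ i' : Fin j,
          (if distAt g c i ∧ distAt g c i' then (1:ℝ) else 0) :=
        Finset.sum_congr rfl fun c _ => hsq c
    _ = ∑ i : Fin j, ∑ c : Fin j → Fin Y, ∑ i' : Fin j,
          (if distAt g c i ∧ distAt g c i' then (1:ℝ) else 0) := Finset.sum_comm
    _ = ∑ i : Fin j, ∑ i' : Fin j, ∑ c : Fin j → Fin Y,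
          (if distAt g c i ∧ distAt g c i' then (1:ℝ) else 0) :=
        Finset.sum_congr rfl fun i _ => Finset.sum_comm
    _ = ∑ i : Fin j, ∑ i' : Fin j, (if i = i' then (Y:ℝ) ^ (j - 1) else (Y:ℝ) ^ (j - 2)) :=
        Finset.sum_congr rfl fun i _ => Finset.sum_congr rfl fun i' _ => step i i'
    _ = ∑ i : Fin j, ((Y:ℝ) ^ (j-1) + ((j:ℝ) - 1) * (Y:ℝ) ^ (j-2)) := by
        apply Finset.sum_congr rfl; intro i _
        have expand : ∀ i' : Fin j, (if i = i' then (Y:ℝ) ^ (j - 1) else (Y:ℝ) ^ (j - 2))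
            = (Y:ℝ) ^ (j-2) + (if i = i' then (Y:ℝ) ^ (j-1) - (Y:ℝ) ^ (j-2) else 0) := by
          intro i'; by_cases h : i = i' <;> simp [h]
        rw [Finset.sum_congr rfl fun i' _ => expand i', Finset.sum_add_distrib,
          Finset.sum_ite_eq univ i (fun _ => (Y:ℝ)^(j-1) - (Y:ℝ)^(j-2)), if_pos (mem_univ i),
          Finset.sum_const, Finset.card_univ, Fintype.card_fin, nsmul_eq_mul]
        ring
    _ = j * (Y : ℝ) ^ (j - 1) + ((j:ℝ) ^ 2 - j) * (Y : ℝ) ^ (j - 2) := by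
        rw [Finset.sum_const, Finset.card_univ, Fintype.card_fin, nsmul_eq_mul]; ring

end Stmt17

open Stmt17

/-- abstract subdivision lemma. Let `Y ≥ 2` and let `F` assign a
nonnegative real to each node of the `Y`-ary subdivision tree (nodes at depth `j` are
modelled as sequences `Fin j → Fin Y`), with root value `≤ N₀`, such that whenever a
node is subdivided, at least one child `c'` satisfies `F(c') ≤ F(c)/2` and all children
`c''` satisfy `F(c'') ≤ F(c)`. Then there exist `δ > 0` and `j₀` (depending only on
`Y`) such that for all `j ≥ j₀`, at least half of the `Y^j` nodes at depth `j` satisfy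
`F ≤ N₀/(Y^j)^δ`. -/
theorem stmt17 (Y : ℕ) (hY : 2 ≤ Y) :
    ∃ δ : ℝ, 0 < δ ∧ ∃ j₀ : ℕ,
      ∀ (F : (j : ℕ) → (Fin j → Fin Y) → ℝ) (N₀ : ℝ),
        (∀ j c, 0 ≤ F j c) →
        (∀ c : Fin 0 → Fin Y, F 0 c ≤ N₀) →
        (∀ (j : ℕ) (c : Fin j → Fin Y),
          ∃ y : Fin Y, F (j + 1) (Fin.snoc c y) ≤ F j c / 2) →
        (∀ (j : ℕ) (c : Fin j → Fin Y) (y : Fin Y),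
          F (j + 1) (Fin.snoc c y) ≤ F j c) →
        ∀ j : ℕ, j₀ ≤ j →
          ((Y : ℝ) ^ j) / 2 ≤
            ((Finset.univ.filter fun c : Fin j → Fin Y =>
              F j c ≤ N₀ / ((Y : ℝ) ^ j) ^ δ).card : ℝ) := by
  haveI : NeZero Y := ⟨by omega⟩
  have hY0 : (0:ℝ) < Y := by positivity
  have hYR : (2:ℝ) ≤ (Y:ℝ) := by exact_mod_cast hY
  refine ⟨1 / (2 * (Y:ℝ) ^ 2), by positivity, 8 * Y, ?_⟩
  intro F N₀ h1 h2 h3 h4 j hj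
  classical
  set δ : ℝ := 1 / (2 * (Y:ℝ) ^ 2) with hδ
  set g : ∀ m, (Fin m → Fin Y) → Fin Y := fun m c => Classical.choose (h3 m c) with hg
  have hdecay := decay g F N₀ h2 (fun m c => Classical.choose_spec (h3 m c)) h4 j
  have hN : 0 ≤ N₀ := le_trans (h1 0 (fun i => i.elim0)) (h2 _)
  have hj1 : 1 ≤ j := by omega
  have hj2 : 2 ≤ j := by omega
  have hjR : (8:ℝ) * Y ≤ (j:ℝ) := by exact_mod_cast hj
  have hjpos : (0:ℝ) < j := by positivity
  obtain ⟨q, hqpos, e0, e1, e2⟩ : ∃ q : ℝ, 0 < q ∧ (Y:ℝ) ^ (j - 2) = q ∧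
      (Y:ℝ) ^ (j - 1) = q * Y ∧ (Y:ℝ) ^ j = q * Y * Y :=
    ⟨(Y:ℝ) ^ (j - 2), by positivity, rfl,
      by rw [← pow_succ]; congr 1; omega,
      by rw [← pow_succ, ← pow_succ]; congr 1; omega⟩
  have hYne : (Y:ℝ) ≠ 0 := ne_of_gt hY0
  -- variance bound
  have hVar : ∑ c : Fin j → Fin Y, ((S g c : ℝ) - j / Y) ^ 2 ≤ j * (q * Y) := by
    have expand : ∀ c : Fin j → Fin Y, ((S g c : ℝ) - j / Y) ^ 2
        = (S g c : ℝ)^2 - (2 * ((j:ℝ)/Y)) * (S g c : ℝ) + ((j:ℝ)/Y)^2 := fun c => by ring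
    rw [Finset.sum_congr rfl fun c _ => expand c, Finset.sum_add_distrib,
      Finset.sum_sub_distrib, ← Finset.mul_sum, sum_S, sum_S_sq, Finset.sum_const,
      Finset.card_univ, Fintype.card_fun, Fintype.card_fin, Fintype.card_fin, nsmul_eq_mul]
    push_cast
    rw [e0, e1, e2]
    have key : ↑j * (q * ↑Y) + ((j:ℝ) ^ 2 - ↑j) * q - 2 * (↑j / ↑Y) * (↑j * (q * ↑Y))
        + q * ↑Y * ↑Y * ((j:ℝ) / ↑Y) ^ 2 = ↑j * (q * ↑Y) - ↑j * q := by
      field_simp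
      ring
    linarith [key, mul_pos hjpos hqpos]
  -- Chebyshev
  set bad : Finset (Fin j → Fin Y) := univ.filter (fun c => (S g c : ℝ) < j / (2 * Y)) with hbaddef
  have cheb : (bad.card : ℝ) * ((j:ℝ) / (2 * Y)) ^ 2 ≤ j * (q * Y) := by
    refine le_trans ?_ hVar
    calc (bad.card : ℝ) * ((j:ℝ) / (2 * Y)) ^ 2
        = ∑ _c ∈ bad, ((j:ℝ) / (2 * Y)) ^ 2 := by rw [Finset.sum_const, nsmul_eq_mul]
      _ ≤ ∑ c ∈ bad, ((S g c : ℝ) - j / Y) ^ 2 := by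
          apply Finset.sum_le_sum
          intro c hc
          rw [hbaddef, mem_filter] at hc
          have hid : (j:ℝ)/Y - j/(2*Y) = j/(2*Y) := by field_simp; ring
          have h1' : (j:ℝ)/(2*Y) ≤ (j:ℝ)/Y - (S g c : ℝ) := by
            have := hc.2; linarith [hid]
          have h0 : (0:ℝ) ≤ (j:ℝ)/(2*Y) := by positivity
          calc ((j:ℝ)/(2*Y))^2 ≤ ((j:ℝ)/Y - (S g c : ℝ))^2 := by
                apply pow_le_pow_left₀ h0 h1'
            _ = ((S g c : ℝ) - j/Y)^2 := by ring
      _ ≤ ∑ c : Fin j → Fin Y, ((S g c : ℝ) - j / Y) ^ 2 :=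
          Finset.sum_le_sum_of_subset_of_nonneg (Finset.filter_subset _ _)
            (fun c _ _ => sq_nonneg _)
  have hb0 : (0:ℝ) ≤ (bad.card : ℝ) := Nat.cast_nonneg _
  have cheb' : (bad.card : ℝ) * (j:ℝ)^2 ≤ 4 * j * q * (Y:ℝ)^3 := by
    have h4Y : (0:ℝ) < 4 * (Y:ℝ)^2 := by positivity
    have hmul := mul_le_mul_of_nonneg_right cheb h4Y.le
    calc (bad.card : ℝ) * (j:ℝ)^2
        = (bad.card : ℝ) * ((j:ℝ) / (2*Y))^2 * (4*(Y:ℝ)^2) := by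
          have hid : ((j:ℝ)/(2*Y))^2 * (4*(Y:ℝ)^2) = (j:ℝ)^2 := by
            field_simp
            ring
          rw [mul_assoc, hid]
      _ ≤ (j:ℝ) * (q * Y) * (4*(Y:ℝ)^2) := hmul
      _ = 4 * j * q * (Y:ℝ)^3 := by ring
  have s1 : (bad.card : ℝ) * j ≤ 4 * q * (Y:ℝ)^3 := by
    nlinarith [cheb', hjpos, mul_pos hqpos (mul_pos hY0 (mul_pos hY0 hY0))]
  have hbadcard : (bad.card : ℝ) ≤ (Y:ℝ) ^ j / 2 := by
    rw [e2]
    nlinarith [s1, mul_le_mul_of_nonneg_left hjR hb0, hY0, hqpos,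
      mul_pos hqpos (mul_pos hY0 hY0)]
  -- good set
  have hkey : ∀ c : Fin j → Fin Y, ¬ ((S g c : ℝ) < j / (2 * Y)) →
      F j c ≤ N₀ / ((Y:ℝ) ^ j) ^ δ := by
    intro c hc
    push_neg at hc
    have hpow : ((Y:ℝ) ^ j) ^ δ ≤ 2 ^ (S g c) := by
      have e1 : ((Y:ℝ) ^ j) ^ δ = (Y:ℝ) ^ ((j:ℝ) * δ) := by
        rw [← Real.rpow_natCast (Y:ℝ) j, ← Real.rpow_mul hY0.le]
      have e2 : (Y:ℝ) ≤ (2:ℝ) ^ (Y:ℝ) := by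
        have := (Nat.lt_two_pow_self (n := Y))
        have h := (Nat.cast_lt (α := ℝ)).mpr this
        rw [Nat.cast_pow] at h
        calc (Y:ℝ) ≤ ((2:ℕ):ℝ) ^ Y := le_of_lt (by exact_mod_cast h)
          _ = (2:ℝ) ^ (Y:ℝ) := by rw [Real.rpow_natCast]; norm_num
      have e3 : (Y:ℝ) ^ ((j:ℝ) * δ) ≤ ((2:ℝ) ^ (Y:ℝ)) ^ ((j:ℝ) * δ) := by
        apply Real.rpow_le_rpow hY0.le e2 (by positivity)
      have e4 : ((2:ℝ) ^ (Y:ℝ)) ^ ((j:ℝ) * δ) = (2:ℝ) ^ ((Y:ℝ) * ((j:ℝ) * δ)) := by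
        rw [← Real.rpow_mul (by norm_num)]
      have e5 : (Y:ℝ) * ((j:ℝ) * δ) = (j:ℝ) / (2 * Y) := by
        rw [hδ]; field_simp
      have e6 : (2:ℝ) ^ ((j:ℝ) / (2 * Y)) ≤ (2:ℝ) ^ ((S g c : ℝ)) := by
        apply Real.rpow_le_rpow_of_exponent_le (by norm_num) hc
      have e7 : (2:ℝ) ^ ((S g c : ℝ)) = 2 ^ (S g c) := Real.rpow_natCast 2 _
      rw [e1]
      calc (Y:ℝ) ^ ((j:ℝ) * δ) ≤ (2:ℝ) ^ ((Y:ℝ) * ((j:ℝ) * δ)) := by rw [← e4]; exact e3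
        _ = (2:ℝ) ^ ((j:ℝ) / (2 * Y)) := by rw [e5]
        _ ≤ 2 ^ (S g c) := by rw [← e7]; exact e6
    have h2S : (0:ℝ) < 2 ^ (S g c) := by positivity
    have hF : F j c ≤ N₀ / 2 ^ (S g c) := (le_div_iff₀ h2S).mpr (hdecay c)
    refine le_trans hF ?_
    apply div_le_div_of_nonneg_left hN ?_ hpow
    positivity
  -- count
  have hsplit : bad.card + (univ.filter (fun c : Fin j → Fin Y =>
      ¬ ((S g c : ℝ) < j / (2 * Y)))).card = Y ^ j := by
    rw [hbaddef, Finset.card_filter_add_card_filter_not, Finset.card_univ,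
      Fintype.card_fun, Fintype.card_fin, Fintype.card_fin]
  have hsub : (univ.filter (fun c : Fin j → Fin Y => ¬ ((S g c : ℝ) < j / (2 * Y))))
      ⊆ univ.filter (fun c : Fin j → Fin Y => F j c ≤ N₀ / ((Y:ℝ) ^ j) ^ δ) := by
    intro c hc
    rw [mem_filter] at hc ⊢
    exact ⟨hc.1, hkey c hc.2⟩
  have hcard := Finset.card_le_card hsub
  have : ((Y:ℝ) ^ j) - (bad.card : ℝ) ≤ ((univ.filter (fun c : Fin j → Fin Y =>
      F j c ≤ N₀ / ((Y:ℝ) ^ j) ^ δ)).card : ℝ) := by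
    have e : ((univ.filter (fun c : Fin j → Fin Y =>
        ¬ ((S g c : ℝ) < j / (2 * Y)))).card : ℝ) = (Y:ℝ) ^ j - (bad.card : ℝ) := by
      have := congrArg (fun n : ℕ => (n : ℝ)) hsplit
      push_cast at this
      linarith
    calc ((Y:ℝ) ^ j) - (bad.card : ℝ)
        = ((univ.filter (fun c : Fin j → Fin Y =>
            ¬ ((S g c : ℝ) < j / (2 * Y)))).card : ℝ) := e.symm
      _ ≤ _ := by exact_mod_cast hcard
  linarith
end
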